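/- arXiv:1602.00095 — 2 statements merged into one kernel-verified Lean document; each statement's English description precedes it below -/
import Mathlib

section
/- For the non-symmetric binary channel with rows ((1+d)/2, (1-d)/2) and (1/2, 1/2), the channel capacity C = max_{p₀} I(X;Y) satisfies C = d²/(8 log 2) + O(d⁴) as d → 0; in particular, for all sufficiently small d > 0, C ≥ d²/(16 log 2). -/
/-- Binary entropy function (base-2 logarithms). -/
noncomputable def binEnt (p : ℝ) : ℝ :=
  -(p * Real.logb 2 p) - (1 - p) * Real.logb 2 (1 - p)

/-- Mutual information of the non-symmetric binary channel with rows
`((1+d)/2, (1-d)/2)` and `(1/2, 1/2)`, with input probability `p₀` on `x = 0`. -/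
noncomputable def nonsymInfo (d p₀ : ℝ) : ℝ :=
  binEnt ((1 + p₀ * d) / 2) - p₀ * (binEnt ((1 - d) / 2) - 1) - 1

noncomputable def Fent (x : ℝ) : ℝ := (1+x) * Real.log (1+x) + (1-x) * Real.log (1-x)

lemma Fent_neg (x : ℝ) : Fent (-x) = Fent x := by
  unfold Fent
  rw [show (1:ℝ) + -x = 1 - x by ring, show (1:ℝ) - -x = 1 + x by ring]
  ring

lemma Fent_bounds {x : ℝ} (h0 : 0 ≤ x) (h1 : x ≤ 1/30) :
    x^2 ≤ Fent x ∧ Fent x ≤ x^2 + x^4 := by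
  have hx1 : |x| < 1 := by rw [abs_of_nonneg h0]; linarith
  have hx1' : |(-x)| < 1 := by rwa [abs_neg]
  have A := Real.abs_log_sub_add_sum_range_le hx1 4
  have B := Real.abs_log_sub_add_sum_range_le hx1' 4
  rw [abs_of_nonneg h0] at A
  rw [abs_neg, abs_of_nonneg h0] at B
  simp only [Finset.sum_range_succ, Finset.sum_range_zero] at A B
  norm_num at A B
  rw [abs_le] at A B
  have hx5 : x^5/(1-x) ≤ 2*x^5 := by
    rw [div_le_iff₀ (by linarith)]; nlinarith [pow_nonneg h0 5]
  have hL1 := A.1; have hL2 := A.2; have hP1 := B.1; have hP2 := B.2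
  have h5 : x^5 ≤ x^4 * (1/30) := by
    have := pow_le_pow_left₀ h0 h1 4
    nlinarith [pow_nonneg h0 4]
  constructor
  · unfold Fent
    nlinarith [pow_nonneg h0 4, pow_nonneg h0 5, mul_nonneg (pow_nonneg h0 5) h0]
  · unfold Fent
    nlinarith [pow_nonneg h0 4, pow_nonneg h0 5, mul_nonneg (pow_nonneg h0 5) h0]

lemma binEnt_half {x : ℝ} (h1 : -1 < x) (h2 : x < 1) :
    binEnt ((1+x)/2) = 1 - Fent x / (2 * Real.log 2) := by
  have hl2 : Real.log 2 ≠ 0 := by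
    have := Real.log_pos (by norm_num : (1:ℝ) < 2); linarith
  unfold binEnt Fent
  rw [show (1:ℝ) - (1+x)/2 = (1-x)/2 by ring]
  rw [Real.logb, Real.logb]
  rw [Real.log_div (by linarith) two_ne_zero, Real.log_div (by linarith) two_ne_zero]
  field_simp
  ring

lemma info_eq {d p : ℝ} (hd0 : 0 ≤ d) (hd1 : d < 1) (hp0 : 0 ≤ p) (hp1 : p ≤ 1) :
    nonsymInfo d p = (p * Fent d - Fent (p*d)) / (2 * Real.log 2) := by
  have hl2 : Real.log 2 ≠ 0 := by
    have := Real.log_pos (by norm_num : (1:ℝ) < 2); linarith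
  have hpd0 : 0 ≤ p * d := mul_nonneg hp0 hd0
  have hpd1 : p * d < 1 := lt_of_le_of_lt (by nlinarith) hd1
  unfold nonsymInfo
  rw [show (1:ℝ) - d = 1 + (-d) by ring]
  rw [binEnt_half (by linarith) (by linarith), binEnt_half (by linarith) (by linarith),
    Fent_neg]
  field_simp
  ring

lemma log2_bounds : (1:ℝ)/2 < Real.log 2 ∧ Real.log 2 < 1 := by
  constructor
  · have := Real.log_two_gt_d9; linarith
  · have := Real.log_two_lt_d9; linarith

/-- Upper bound on the information for all admissible inputs. -/
lemma info_upper {d p : ℝ} (hd0 : 0 < d) (hd1 : d ≤ 1/30) (hp : p ∈ Set.Icc (0:ℝ) 1) :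
    nonsymInfo d p ≤ d^2 / (8 * Real.log 2) + d^4 := by
  obtain ⟨hp0, hp1⟩ := hp
  have hl2 := log2_bounds
  have hpd0 : 0 ≤ p * d := mul_nonneg hp0 hd0.le
  have hpd1 : p * d ≤ 1/30 := le_trans (by nlinarith) hd1
  have hFd := Fent_bounds hd0.le hd1
  have hFpd := Fent_bounds hpd0 hpd1
  rw [info_eq hd0.le (by linarith) hp0 hp1]
  have hnum : p * Fent d - Fent (p*d) ≤ d^2/4 + d^4 := by
    have h1 : Fent (p*d) ≥ (p*d)^2 := hFpd.1
    have h2 : Fent d ≤ d^2 + d^4 := hFd.2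
    nlinarith [sq_nonneg (p - 1/2), pow_nonneg hd0.le 4]
  have hpos : (0:ℝ) < 2 * Real.log 2 := by linarith [hl2.1]
  rw [div_le_iff₀ hpos]
  have h4 : (0:ℝ) ≤ d^4 := by positivity
  have h2 : (0:ℝ) < d^2 := by positivity
  have key : d^2/4 + d^4 ≤ (d^2 / (8 * Real.log 2) + d^4) * (2 * Real.log 2) := by
    have : (d^2 / (8 * Real.log 2)) * (2 * Real.log 2) = d^2/4 := by
      field_simp; ring
    nlinarith [hl2.1]
  linarith [hnum, key]

/-- Lower bound at `p = 1/2`. -/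
lemma info_lower {d : ℝ} (hd0 : 0 < d) (hd1 : d ≤ 1/30) :
    nonsymInfo d (1/2) ≥ d^2 / (8 * Real.log 2) - d^4 := by
  have hl2 := log2_bounds
  have hFd := Fent_bounds hd0.le hd1
  have hFd2 := Fent_bounds (by linarith : (0:ℝ) ≤ (1/2)*d) (by linarith : (1/2)*d ≤ 1/30)
  rw [info_eq hd0.le (by linarith) (by norm_num) (by norm_num)]
  have hnum : (1/2) * Fent d - Fent ((1/2)*d) ≥ d^2/4 - d^4/16 := by
    have h1 : Fent d ≥ d^2 := hFd.1
    have h2 : Fent ((1/2)*d) ≤ ((1/2)*d)^2 + ((1/2)*d)^4 := hFd2.2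
    nlinarith [pow_nonneg hd0.le 4]
  have hpos : (0:ℝ) < 2 * Real.log 2 := by linarith [hl2.1]
  rw [ge_iff_le, le_div_iff₀ hpos]
  have key : (d^2 / (8 * Real.log 2) - d^4) * (2 * Real.log 2) ≤ d^2/4 - d^4/16 := by
    have he : (d^2 / (8 * Real.log 2)) * (2 * Real.log 2) = d^2/4 := by
      field_simp; ring
    nlinarith [hl2.1, pow_nonneg hd0.le 4]
  linarith [hnum, key]

/-- The capacity `C = sup_{p₀ ∈ [0,1]} I(X;Y)` of the non-symmetric binary
channel satisfies `C = d²/(8 log 2) + O(d⁴)` as `d → 0`; in particular for all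
sufficiently small `d > 0`, `C ≥ d²/(16 log 2)`. -/
theorem nonsym_channel_capacity :
    (∃ K > (0 : ℝ), ∃ δ > (0 : ℝ), ∀ d : ℝ, 0 < d → d ≤ δ →
      |(⨆ p₀ ∈ Set.Icc (0:ℝ) 1, nonsymInfo d p₀) - d ^ 2 / (8 * Real.log 2)| ≤
        K * d ^ 4) ∧
    (∃ δ > (0 : ℝ), ∀ d : ℝ, 0 < d → d ≤ δ →
      (⨆ p₀ ∈ Set.Icc (0:ℝ) 1, nonsymInfo d p₀) ≥ d ^ 2 / (16 * Real.log 2)) := by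
  have hl2 := log2_bounds
  have main : ∀ d : ℝ, 0 < d → d ≤ 1/30 →
      d ^ 2 / (8 * Real.log 2) - d ^ 4 ≤ (⨆ p₀ ∈ Set.Icc (0:ℝ) 1, nonsymInfo d p₀) ∧
      (⨆ p₀ ∈ Set.Icc (0:ℝ) 1, nonsymInfo d p₀) ≤ d ^ 2 / (8 * Real.log 2) + d ^ 4 := by
    intro d hd0 hd1
    set B : ℝ := d ^ 2 / (8 * Real.log 2) + d ^ 4 with hB
    have hB0 : 0 ≤ B := by
      have : (0:ℝ) < 8 * Real.log 2 := by linarith [hl2.1]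
      positivity
    have hub : ∀ p₀ : ℝ, (⨆ _ : p₀ ∈ Set.Icc (0:ℝ) 1, nonsymInfo d p₀) ≤ B := by
      intro p₀
      exact Real.iSup_le (fun hp => info_upper hd0 hd1 hp) hB0
    constructor
    · have hbdd : BddAbove (Set.range fun p₀ : ℝ =>
          ⨆ _ : p₀ ∈ Set.Icc (0:ℝ) 1, nonsymInfo d p₀) := by
        refine ⟨B, ?_⟩
        rintro y ⟨p₀, rfl⟩
        exact hub p₀
      have hmem : (1/2 : ℝ) ∈ Set.Icc (0:ℝ) 1 := by norm_num
      have step := le_ciSup hbdd (1/2 : ℝ)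
      rw [ciSup_pos hmem] at step
      have := info_lower hd0 hd1
      linarith
    · exact Real.iSup_le hub hB0
  constructor
  · refine ⟨1, one_pos, 1/30, by norm_num, fun d hd0 hd1 => ?_⟩
    obtain ⟨hlo, hhi⟩ := main d hd0 hd1
    rw [abs_le]
    constructor <;> [linarith; linarith]
  · refine ⟨1/30, by norm_num, fun d hd0 hd1 => ?_⟩
    obtain ⟨hlo, _⟩ := main d hd0 hd1
    have hd2 : d^2 ≤ 1/900 := by nlinarith
    have hpos : (0:ℝ) < Real.log 2 := by linarith [hl2.1]
    have key : d ^ 2 / (16 * Real.log 2) ≤ d ^ 2 / (8 * Real.log 2) - d ^ 4 := by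
      rw [div_sub' (by positivity : (8 * Real.log 2) ≠ 0), div_le_div_iff₀ (by positivity) (by positivity)]
      have h4 : d^4 ≤ d^2 * (1/900) := by nlinarith [sq_nonneg d]
      have l1 : (Real.log 2)^2 ≤ Real.log 2 := by nlinarith
      nlinarith [mul_le_mul_of_nonneg_left h4 hpos.le, mul_nonneg hpos.le (pow_nonneg hd0.le 4),
        mul_le_mul_of_nonneg_right l1 (pow_nonneg hd0.le 4), mul_nonneg hpos.le (pow_nonneg hd0.le 2)]
    linarith
end

section
/- For the non-symmetric binary channel above, the choice p₀ = 1/2 is asymptotically optimal to second order: I(X;Y) evaluated at p₀ = 1/2 equals d²/(8 log 2) + O(d⁴), and for every fixed p₀ ∈ [0,1], I(X;Y) ≤ (p₀ - p₀²)·d²/(2 log 2) + O(d⁴) as d → 0. -/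
namespace NonsymAux

noncomputable def phi (x : ℝ) : ℝ := (1 + x) * Real.log (1 + x) + (1 - x) * Real.log (1 - x)

lemma log_taylor {x : ℝ} (hx : |x| ≤ 1/2) :
    |Real.log (1 - x) + (x + x^2/2 + x^3/3)| ≤ 2 * x^4 := by
  have h : |x| < 1 := lt_of_le_of_lt hx (by norm_num)
  have := Real.abs_log_sub_add_sum_range_le h 3
  have hsum : (∑ i ∈ Finset.range 3, x ^ (i + 1) / (i + 1)) = x + x^2/2 + x^3/3 := by
    simp [Finset.sum_range_succ]
    ring
  rw [hsum] at this
  have h1 : (1:ℝ)/2 ≤ 1 - |x| := by linarith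
  have h2 : |x| ^ 4 / (1 - |x|) ≤ |x|^4 / (1/2) := by
    apply div_le_div_of_nonneg_left (by positivity) (by norm_num) h1
  have h3 : |x|^4 = x^4 := by
    rw [← abs_pow]; exact abs_of_nonneg (by positivity)
  calc |Real.log (1 - x) + (x + x^2/2 + x^3/3)|
      = |(x + x^2/2 + x^3/3) + Real.log (1 - x)| := by rw [add_comm]
    _ ≤ |x| ^ (3+1) / (1 - |x|) := this
    _ ≤ |x|^4 / (1/2) := h2
    _ = 2 * x^4 := by rw [h3]; ring

lemma phi_bound {x : ℝ} (hx : |x| ≤ 1/2) : |phi x - x^2| ≤ 7 * x^4 := by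
  have hx' : |(-x)| ≤ 1/2 := by rwa [abs_neg]
  have h1 := log_taylor hx
  have h2 := log_taylor hx'
  -- h2 : |log (1+x) + (-x + x²/2 - x³/3)| ≤ 2x⁴
  have h2' : |Real.log (1 + x) - (x - x^2/2 + x^3/3)| ≤ 2 * x^4 := by
    have e : (1 : ℝ) - (-x) = 1 + x := by ring
    rw [e] at h2
    have e2 : Real.log (1 + x) + ((-x) + (-x)^2/2 + (-x)^3/3)
        = Real.log (1 + x) - (x - x^2/2 + x^3/3) := by ring
    rw [e2] at h2
    have e3 : (-x)^4 = x^4 := by ring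
    rwa [e3] at h2
  set E₁ := Real.log (1 + x) - (x - x^2/2 + x^3/3) with hE₁
  set E₂ := Real.log (1 - x) + (x + x^2/2 + x^3/3) with hE₂
  have key : phi x - x^2 = (1 + x) * E₁ + (1 - x) * E₂ + (2/3) * x^4 := by
    rw [hE₁, hE₂]; unfold phi; ring
  rw [key]
  have hax : -(1/2 : ℝ) ≤ x ∧ x ≤ 1/2 := abs_le.mp hx
  have hb1 : |(1 + x) * E₁| ≤ 3 * x^4 := by
    rw [abs_mul]
    have : |1 + x| ≤ 3/2 := abs_le.mpr ⟨by linarith [hax.1], by linarith [hax.2]⟩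
    calc |1 + x| * |E₁| ≤ (3/2) * (2 * x^4) :=
          mul_le_mul this h2' (abs_nonneg _) (by norm_num)
      _ = 3 * x^4 := by ring
  have hb2 : |(1 - x) * E₂| ≤ 3 * x^4 := by
    rw [abs_mul]
    have : |1 - x| ≤ 3/2 := abs_le.mpr ⟨by linarith [hax.2], by linarith [hax.1]⟩
    calc |1 - x| * |E₂| ≤ (3/2) * (2 * x^4) :=
          mul_le_mul this h1 (abs_nonneg _) (by norm_num)
      _ = 3 * x^4 := by ring
  calc |(1 + x) * E₁ + (1 - x) * E₂ + (2/3) * x^4|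
      ≤ |(1 + x) * E₁ + (1 - x) * E₂| + |(2/3) * x^4| := abs_add_le _ _
    _ ≤ (|(1 + x) * E₁| + |(1 - x) * E₂|) + |(2/3) * x^4| := by
        gcongr; exact abs_add_le _ _
    _ ≤ (3 * x^4 + 3 * x^4) + (2/3) * x^4 := by
        have : |(2/3 : ℝ) * x^4| = (2/3) * x^4 := abs_of_nonneg (by positivity)
        rw [this]; gcongr
    _ ≤ 7 * x^4 := by nlinarith [pow_nonneg (sq_nonneg x) 2]

lemma binEnt_eq {x : ℝ} (h1 : 0 < 1 + x) (h2 : 0 < 1 - x) :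
    binEnt ((1 + x) / 2) = 1 - phi x / (2 * Real.log 2) := by
  have hL : Real.log 2 ≠ 0 := by
    have := Real.log_pos (by norm_num : (1:ℝ) < 2); linarith
  have e : (1:ℝ) - (1 + x)/2 = (1 - x)/2 := by ring
  unfold binEnt phi
  rw [e, Real.logb, Real.logb, Real.log_div h1.ne' two_ne_zero,
    Real.log_div h2.ne' two_ne_zero]
  field_simp
  ring

lemma nonsymInfo_eq {d p₀ : ℝ} (hd : |d| ≤ 1/2) (hp : p₀ ∈ Set.Icc (0:ℝ) 1) :
    nonsymInfo d p₀ = (p₀ * phi d - phi (p₀ * d)) / (2 * Real.log 2) := by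
  have hd' := abs_le.mp hd
  have hpd : |p₀ * d| ≤ 1/2 := by
    rw [abs_mul, abs_of_nonneg hp.1]
    calc p₀ * |d| ≤ 1 * (1/2) :=
      mul_le_mul hp.2 hd (abs_nonneg d) zero_le_one
    _ = 1/2 := by norm_num
  have hpd' := abs_le.mp hpd
  have h1 : binEnt ((1 + p₀ * d) / 2) = 1 - phi (p₀ * d) / (2 * Real.log 2) :=
    binEnt_eq (by linarith [hpd'.1]) (by linarith [hpd'.2])
  have h2 : binEnt ((1 - d) / 2) = 1 - phi (-d) / (2 * Real.log 2) := by
    have := binEnt_eq (x := -d) (by linarith [hd'.2]) (by linarith [hd'.1])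
    have e : (1 + -d)/2 = (1 - d)/2 := by ring
    rwa [e] at this
  have hphi : phi (-d) = phi d := by unfold phi; ring
  rw [nonsymInfo, h1, h2, hphi]
  ring

lemma log2_gt : (0.6931471803 : ℝ) < Real.log 2 := Real.log_two_gt_d9

end NonsymAux

/-- `p₀ = 1/2` is asymptotically optimal to second order: at `p₀ = 1/2` the
mutual information is `d²/(8 log 2) + O(d⁴)`, and for every fixed `p₀ ∈ [0,1]`,
`I(X;Y) ≤ (p₀ - p₀²) d²/(2 log 2) + O(d⁴)` as `d → 0`. -/
theorem nonsym_channel_half_optimal :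
    (∃ K > (0 : ℝ), ∃ δ > (0 : ℝ), ∀ d : ℝ, |d| ≤ δ →
      |nonsymInfo d (1 / 2) - d ^ 2 / (8 * Real.log 2)| ≤ K * d ^ 4) ∧
    (∀ p₀ ∈ Set.Icc (0:ℝ) 1, ∃ K > (0 : ℝ), ∃ δ > (0 : ℝ), ∀ d : ℝ, |d| ≤ δ →
      nonsymInfo d p₀ ≤ (p₀ - p₀ ^ 2) * d ^ 2 / (2 * Real.log 2) + K * d ^ 4) := by
  have hL := NonsymAux.log2_gt
  have hLpos : (0:ℝ) < Real.log 2 := by linarith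
  constructor
  · refine ⟨4, by norm_num, 1/2, by norm_num, fun d hd => ?_⟩
    have hinfo := NonsymAux.nonsymInfo_eq hd (by norm_num : (1/2 : ℝ) ∈ Set.Icc (0:ℝ) 1)
    have hA := NonsymAux.phi_bound hd
    have hd2 : |(1/2 : ℝ) * d| ≤ 1/2 := by
      rw [abs_mul, abs_of_nonneg (by norm_num : (0:ℝ) ≤ 1/2)]
      have := abs_nonneg d; linarith [abs_le.mp hd]
    have hB := NonsymAux.phi_bound hd2
    have hA' := abs_le.mp hA
    have hB' := abs_le.mp hB
    have key : nonsymInfo d (1/2) - d ^ 2 / (8 * Real.log 2)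
        = ((NonsymAux.phi d - d^2)/2 - (NonsymAux.phi ((1/2)*d) - ((1/2)*d)^2))
            / (2 * Real.log 2) := by
      rw [hinfo]; field_simp; ring
    rw [key, abs_div, abs_of_pos (by linarith : (0:ℝ) < 2 * Real.log 2)]
    rw [div_le_iff₀ (by linarith : (0:ℝ) < 2 * Real.log 2)]
    have hd4 : (0:ℝ) ≤ d^4 := by positivity
    have h12 : ((1/2:ℝ)*d)^4 = d^4/16 := by ring
    rw [h12] at hB'
    have habs : |(NonsymAux.phi d - d^2)/2 - (NonsymAux.phi ((1/2)*d) - ((1/2)*d)^2)|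
        ≤ 4 * d^4 := by
      apply abs_le.mpr
      have h12' : ((1/2:ℝ)*d)^2 = d^2/4 := by ring
      rw [h12']
      constructor <;> nlinarith [hA'.1, hA'.2, hB'.1, hB'.2]
    calc |(NonsymAux.phi d - d^2)/2 - (NonsymAux.phi ((1/2)*d) - ((1/2)*d)^2)|
        ≤ 4 * d^4 := habs
      _ ≤ 4 * d^4 * (2 * Real.log 2) := by nlinarith
  · intro p₀ hp
    refine ⟨14, by norm_num, 1/2, by norm_num, fun d hd => ?_⟩
    have hinfo := NonsymAux.nonsymInfo_eq hd hp
    have hA := abs_le.mp (NonsymAux.phi_bound hd)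
    have hpd : |p₀ * d| ≤ 1/2 := by
      rw [abs_mul, abs_of_nonneg hp.1]
      calc p₀ * |d| ≤ 1 * (1/2) := mul_le_mul hp.2 hd (abs_nonneg d) zero_le_one
        _ = 1/2 := by norm_num
    have hB := abs_le.mp (NonsymAux.phi_bound hpd)
    have hd4 : (0:ℝ) ≤ d^4 := by positivity
    have hp4 : p₀^4 ≤ 1 := by
      have h2 : p₀^2 ≤ 1 := by nlinarith [hp.1, hp.2]
      nlinarith [sq_nonneg p₀, h2]
    have hnum : p₀ * NonsymAux.phi d - NonsymAux.phi (p₀ * d)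
        ≤ (p₀ - p₀^2) * d^2 + 14 * d^4 := by
      have h1 : NonsymAux.phi d ≤ d^2 + 7 * d^4 := by linarith [hA.2]
      have h2 : (p₀*d)^2 - 7 * (p₀*d)^4 ≤ NonsymAux.phi (p₀ * d) := by linarith [hB.1]
      have h3 : (p₀*d)^4 ≤ d^4 := by
        have : (p₀*d)^4 = p₀^4 * d^4 := by ring
        rw [this]; nlinarith
      nlinarith [hp.1, hp.2, mul_le_mul_of_nonneg_left h1 hp.1]
    rw [hinfo]
    calc (p₀ * NonsymAux.phi d - NonsymAux.phi (p₀ * d)) / (2 * Real.log 2)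
        ≤ ((p₀ - p₀^2) * d^2 + 14 * d^4) / (2 * Real.log 2) := by
          apply div_le_div_of_nonneg_right hnum (by linarith)
      _ ≤ (p₀ - p₀ ^ 2) * d ^ 2 / (2 * Real.log 2) + 14 * d ^ 4 := by
          rw [add_div]
          gcongr
          calc 14 * d^4 / (2 * Real.log 2) ≤ 14 * d^4 / 1 := by
                apply div_le_div_of_nonneg_left (by positivity) one_pos (by linarith)
            _ = 14 * d^4 := by ring
end
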